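/- If each branch's choice function satisfies IRC, substitutability, and the law of aggregate demand, then the outcome of the cumulative offer process is a stable outcome. -/

import Mathlib

open Finset
variable {I B X : Type*} [DecidableEq I] [DecidableEq B] [DecidableEq X] [Fintype X]

/-- Contracts currently held by the branches: from the cumulative offer set `A`,
each branch holds its choice from the offers addressed to it. -/
noncomputable def held (br : X → B) (C : B → Finset X → Finset X) (A : Finset X) : Finset X :=
  A.filter (fun x => x ∈ C (br x) (A.filter (fun y => br y = br x)))

/-- Agent `i` has no currently held contract. -/
noncomputable def FreeAgent (ag : X → I) (br : X → B) (C : B → Finset X → Finset X)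
    (A : Finset X) (i : I) : Prop :=
  ∀ x ∈ held br C A, ag x ≠ i

/-- Contract `x` is a valid next proposal at cumulative offer set `A`: its agent is
free, `x` is acceptable, not yet proposed, and most preferred among the agent's
acceptable not-yet-proposed contracts (`none` is the outside option; higher
`P`-value = more preferred). -/
noncomputable def Proposable (ag : X → I) (br : X → B) (C : B → Finset X → Finset X)
    (P : I → Option X → ℕ) (A : Finset X) (x : X) : Prop :=
  x ∉ A ∧ P (ag x) none < P (ag x) (some x) ∧ FreeAgent ag br C A (ag x) ∧
    ∀ y : X, ag y = ag x → y ∉ A → P (ag y) none < P (ag y) (some y) →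
      P (ag x) (some y) ≤ P (ag x) (some x)

/-- A policy resolving the arbitrary choice of proposer: it returns a valid proposal
whenever one exists, and `none` exactly when no agent can propose. -/
noncomputable def ValidPolicy (ag : X → I) (br : X → B) (C : B → Finset X → Finset X)
    (P : I → Option X → ℕ) (pol : Finset X → Option X) : Prop :=
  ∀ A : Finset X, (∀ x, pol A = some x → Proposable ag br C P A x) ∧
    (pol A = none → ∀ x, ¬ Proposable ag br C P A x)

/-- The cumulative offer process: starting from offer set `A`, repeatedly add the
proposal chosen by the policy (fuel-indexed; `Fintype.card X + 1` steps suffice). -/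
noncomputable def cop (pol : Finset X → Option X) : ℕ → Finset X → Finset X
  | 0, A => A
  | n + 1, A =>
    match pol A with
    | none => A
    | some x => cop pol n (insert x A)

/-- The outcome of the cumulative offer process. -/
noncomputable def outcome (br : X → B) (C : B → Finset X → Finset X)
    (pol : Finset X → Option X) : Finset X :=
  held br C (cop pol (Fintype.card X + 1) ∅)

/-- Irrelevance of rejected contracts. -/
def IRCb (Cb : Finset X → Finset X) : Prop :=
  ∀ (Y : Finset X) (z : X), z ∉ Y → z ∉ Cb (insert z Y) → Cb Y = Cb (insert z Y)

/-- Substitutability. -/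
def Substb (Cb : Finset X → Finset X) : Prop :=
  ∀ (Y : Finset X) (z z' : X), z ∉ Cb (insert z Y) → z ∉ Cb (insert z' (insert z Y))

/-- Law of aggregate demand. -/
def LADb (Cb : Finset X → Finset X) : Prop :=
  ∀ Y Y' : Finset X, Y ⊆ Y' → (Cb Y).card ≤ (Cb Y').card


/-- Stability of an outcome `Z`: feasibility, individual rationality for agents and
branches, and absence of a blocking set. -/
def IsStable (ag : X → I) (br : X → B) (C : B → Finset X → Finset X)
    (P : I → Option X → ℕ) (Z : Finset X) : Prop :=
  (∀ x ∈ Z, ∀ y ∈ Z, ag x = ag y → x = y) ∧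
  (∀ x ∈ Z, P (ag x) none < P (ag x) (some x)) ∧
  (∀ b, C b (Z.filter (fun x => br x = b)) = Z.filter (fun x => br x = b)) ∧
  ¬ ∃ (b : B) (Y : Finset X), (∀ y ∈ Y, br y = b) ∧
      Y ≠ C b (Z.filter (fun x => br x = b)) ∧
      Y = C b ((Z ∪ Y).filter (fun x => br x = b)) ∧
      ∀ y ∈ Y, P (ag y) none < P (ag y) (some y) ∧
        ∀ z ∈ Z ∪ Y, ag z = ag y → P (ag y) (some z) ≤ P (ag y) (some y)


set_option linter.unusedSectionVars false in
lemma rej_insert {C : Finset X → Finset X} (hsub : Substb C) {Y : Finset X} {x : X} (z : X)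
    (hx : x ∈ Y) (hxc : x ∉ C Y) : x ∉ C (insert z Y) := by
  have h1 : insert x (Y.erase x) = Y := Finset.insert_erase hx
  have h2 := hsub (Y.erase x) x z (by rwa [h1])
  rwa [h1] at h2

set_option linter.unusedSectionVars false in
lemma irc_chain {C : Finset X → Finset X} (hirc : IRCb C) :
    ∀ (S T : Finset X), C S ⊆ T → T ⊆ S → C T = C S := by
  intro S
  induction S using Finset.strongInduction with
  | _ S ih =>
    intro T h1 h2
    by_cases h : S ⊆ T
    · rw [Finset.Subset.antisymm h2 h]
    · obtain ⟨z, hzS, hzT⟩ := Finset.not_subset.mp h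
      have heq : C (S.erase z) = C S := by
        have := hirc (S.erase z) z (Finset.notMem_erase z S)
          (by rw [Finset.insert_erase hzS]; exact fun hc => hzT (h1 hc))
        rwa [Finset.insert_erase hzS] at this
      have hT : T ⊆ S.erase z := fun w hw =>
        Finset.mem_erase.mpr ⟨fun he => hzT (he ▸ hw), h2 hw⟩
      rw [← heq]
      exact ih (S.erase z) (Finset.erase_ssubset hzS) T (by rw [heq]; exact h1) hT

lemma mem_held {br : X → B} {C : B → Finset X → Finset X} {A : Finset X} {x : X} :
    x ∈ held br C A ↔ x ∈ A ∧ x ∈ C (br x) (A.filter (fun y => br y = br x)) :=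
  Finset.mem_filter

lemma held_subset (br : X → B) (C : B → Finset X → Finset X) (A : Finset X) :
    held br C A ⊆ A := Finset.filter_subset _ _

lemma held_filter {br : X → B} {C : B → Finset X → Finset X}
    (hCb : ∀ b Y, C b Y ⊆ Y.filter (fun x => br x = b)) (A : Finset X) (b : B) :
    (held br C A).filter (fun x => br x = b) = C b (A.filter (fun y => br y = b)) := by
  ext x
  rw [Finset.mem_filter, mem_held]
  constructor
  · rintro ⟨⟨hxA, hxc⟩, hb⟩
    rwa [hb] at hxc
  · intro hxc
    have hx' := hCb b _ hxc
    rw [Finset.mem_filter, Finset.mem_filter] at hx'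
    obtain ⟨⟨hxA, hb⟩, -⟩ := hx'
    refine ⟨⟨hxA, ?_⟩, hb⟩
    rwa [hb]

lemma held_insert_mem {br : X → B} {C : B → Finset X → Finset X}
    (hsub : ∀ b, Substb (C b)) {A : Finset X} {z x : X}
    (hx : x ∈ A) (hxh : x ∈ held br C (insert z A)) : x ∈ held br C A := by
  rw [mem_held] at hxh ⊢
  refine ⟨hx, ?_⟩
  by_contra hc
  have hx' : x ∈ A.filter (fun y => br y = br x) := Finset.mem_filter.mpr ⟨hx, rfl⟩
  have h2 := hxh.2
  rw [Finset.filter_insert] at h2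
  split_ifs at h2 with h
  · exact rej_insert (hsub (br x)) z hx' hc h2
  · exact hc h2

/-- The invariant maintained along the cumulative offer process: every proposed
contract is acceptable; each agent holds at most one contract; and every proposed
contract of an agent is weakly preferred to every acceptable unproposed one. -/
def CopInv (ag : X → I) (br : X → B) (C : B → Finset X → Finset X) (P : I → Option X → ℕ)
    (A : Finset X) : Prop :=
  (∀ x ∈ A, P (ag x) none < P (ag x) (some x)) ∧
  (∀ x ∈ held br C A, ∀ y ∈ held br C A, ag x = ag y → x = y) ∧
  (∀ x ∈ A, ∀ y, ag y = ag x → y ∉ A → P (ag x) none < P (ag x) (some y) →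
    P (ag x) (some y) ≤ P (ag x) (some x))

lemma inv_step {ag : X → I} {br : X → B} {C : B → Finset X → Finset X} {P : I → Option X → ℕ}
    (hsub : ∀ b, Substb (C b)) {A : Finset X} {z : X}
    (hz : Proposable ag br C P A z) (hInv : CopInv ag br C P A) :
    CopInv ag br C P (insert z A) := by
  obtain ⟨hz1, hz2, hz3, hz4⟩ := hz
  obtain ⟨i0, i1, i2⟩ := hInv
  have key : ∀ w ∈ held br C (insert z A), w ≠ z → w ∈ held br C A := by
    intro w hw hwz
    have hwA : w ∈ A := by
      rcases Finset.mem_insert.mp (held_subset _ _ _ hw) with h | h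
      · exact absurd h hwz
      · exact h
    exact held_insert_mem hsub hwA hw
  refine ⟨?_, ?_, ?_⟩
  · intro x hx
    rcases Finset.mem_insert.mp hx with h | h
    · subst h; exact hz2
    · exact i0 x h
  · intro x hx y hy hag
    by_cases hxz : x = z <;> by_cases hyz : y = z
    · rw [hxz, hyz]
    · subst hxz
      exact absurd hag.symm (hz3 y (key y hy hyz))
    · subst hyz
      exact absurd hag (hz3 x (key x hx hxz))
    · exact i1 x (key x hx hxz) y (key y hy hyz) hag
  · intro x hx y hagy hyA hacc
    have hyA' : y ∉ A := fun h => hyA (Finset.mem_insert_of_mem h)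
    rcases Finset.mem_insert.mp hx with h | h
    · subst h
      exact hz4 y hagy hyA' (by rwa [hagy])
    · exact i2 x h y hagy hyA' hacc

lemma cop_inv {ag : X → I} {br : X → B} {C : B → Finset X → Finset X} {P : I → Option X → ℕ}
    {pol : Finset X → Option X} (hpol : ValidPolicy ag br C P pol)
    (hsub : ∀ b, Substb (C b)) :
    ∀ (n : ℕ) (A : Finset X), CopInv ag br C P A → CopInv ag br C P (cop pol n A) := by
  intro n
  induction n with
  | zero => intro A h; exact h
  | succ n ih =>
    intro A h
    rw [cop]
    cases hp : pol A with
    | none => exact h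
    | some z => exact ih _ (inv_step hsub ((hpol A).1 z hp) h)

lemma cop_none {ag : X → I} {br : X → B} {C : B → Finset X → Finset X} {P : I → Option X → ℕ}
    {pol : Finset X → Option X} (hpol : ValidPolicy ag br C P pol) :
    ∀ (n : ℕ) (A : Finset X), Fintype.card X < A.card + n →
      ∀ x, ¬ Proposable ag br C P (cop pol n A) x := by
  intro n
  induction n with
  | zero =>
    intro A h
    have := Finset.card_le_univ A
    omega
  | succ n ih =>
    intro A h
    rw [cop]
    cases hp : pol A with
    | none => exact (hpol A).2 hp
    | some z =>
      have hz := (hpol A).1 z hp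
      have hc : (insert z A).card = A.card + 1 := Finset.card_insert_of_notMem hz.1
      exact ih (insert z A) (by omega)

/-- With IRC, substitutability and LAD, the cumulative offer process produces a
stable outcome. -/
theorem cop_stable (ag : X → I) (br : X → B) (C : B → Finset X → Finset X)
    (P : I → Option X → ℕ)
    (hCb : ∀ b Y, C b Y ⊆ Y.filter (fun x => br x = b))
    (hfeas : ∀ b Y, ∀ x ∈ C b Y, ∀ y ∈ C b Y, ag x = ag y → x = y)
    (hirc : ∀ b, IRCb (C b)) (hsub : ∀ b, Substb (C b)) (hlad : ∀ b, LADb (C b))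
    (hP : ∀ i, Function.Injective (P i))
    (pol : Finset X → Option X) (hpol : ValidPolicy ag br C P pol) :
    IsStable ag br C P (outcome br C pol) := by
  rw [outcome]
  set A := cop pol (Fintype.card X + 1) (∅ : Finset X) with hA
  have hInv0 : CopInv ag br C P (∅ : Finset X) := ⟨by simp, by simp [held], by simp⟩
  obtain ⟨i0, i1, i2⟩ := cop_inv hpol hsub (Fintype.card X + 1) ∅ hInv0
  have hterm : ∀ x, ¬ Proposable ag br C P A x :=
    cop_none hpol (Fintype.card X + 1) ∅ (by simp)
  set Z := held br C A with hZ
  have hZfil : ∀ b, Z.filter (fun x => br x = b) = C b (A.filter (fun y => br y = b)) :=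
    fun b => held_filter hCb A b
  have hZA : Z ⊆ A := held_subset _ _ _
  have hbr3 : ∀ b, C b (Z.filter (fun x => br x = b)) = Z.filter (fun x => br x = b) := by
    intro b
    rw [hZfil b]
    exact irc_chain (hirc b) (A.filter (fun y => br y = b)) _ (Finset.Subset.refl _)
      ((hCb b _).trans (Finset.filter_subset _ _))
  refine ⟨i1, fun x hx => i0 x (hZA hx), hbr3, ?_⟩
  rintro ⟨b, Y, hYbr, hYne, hYch, hYpref⟩
  have hYA : Y ⊆ A := by
    intro y hy
    by_contra hyA
    obtain ⟨hacc, hpref⟩ := hYpref y hy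
    have hnotfree : ¬ FreeAgent ag br C A (ag y) := by
      intro hfree
      have hne : (univ.filter
          (fun w => ag w = ag y ∧ w ∉ A ∧ P (ag w) none < P (ag w) (some w))).Nonempty :=
        ⟨y, by simp [hyA, hacc]⟩
      obtain ⟨m, hm, hmax⟩ := Finset.exists_max_image _ (fun w => P (ag y) (some w)) hne
      simp only [Finset.mem_filter, Finset.mem_univ, true_and] at hm
      obtain ⟨hmag, hmA, hmacc⟩ := hm
      refine hterm m ⟨hmA, hmacc, by rw [hmag]; exact hfree, ?_⟩
      intro w hwag hwA hwacc
      have hw : w ∈ univ.filter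
          (fun w => ag w = ag y ∧ w ∉ A ∧ P (ag w) none < P (ag w) (some w)) := by
        simp only [Finset.mem_filter, Finset.mem_univ, true_and]
        exact ⟨hwag.trans hmag, hwA, hwacc⟩
      have := hmax w hw
      simpa [hmag] using this
    have hnf := hnotfree
    rw [FreeAgent] at hnf
    push_neg at hnf
    obtain ⟨z, hzZ, hzag⟩ := hnf
    have hzag' : ag z = ag y := hzag
    have h1 : P (ag y) (some z) ≤ P (ag y) (some y) :=
      hpref z (Finset.mem_union_left _ hzZ) hzag'
    have h2 : P (ag y) (some y) ≤ P (ag y) (some z) := by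
      have := i2 z (hZA hzZ) y hzag'.symm hyA (by rw [hzag']; exact hacc)
      rwa [hzag'] at this
    have heq : P (ag y) (some z) = P (ag y) (some y) := le_antisymm h1 h2
    have : z = y := Option.some_injective X (hP (ag y) heq)
    exact hyA (this ▸ hZA hzZ)
  have hWsub : (Z ∪ Y).filter (fun x => br x = b) ⊆ A.filter (fun y => br y = b) :=
    Finset.filter_subset_filter _ (Finset.union_subset hZA hYA)
  have hCsub : C b (A.filter (fun y => br y = b)) ⊆ (Z ∪ Y).filter (fun x => br x = b) := by
    rw [← hZfil b]
    exact Finset.filter_subset_filter _ Finset.subset_union_left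
  have hkey : C b ((Z ∪ Y).filter (fun x => br x = b)) = C b (A.filter (fun y => br y = b)) :=
    irc_chain (hirc b) _ _ hCsub hWsub
  exact hYne (((hYch.trans hkey).trans (hZfil b).symm).trans (hbr3 b).symm)
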